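/- Let n ≥ 1, let P be any n×n complex matrix, and let f, g ∈ ℂ. Let A be the 2×2 matrix [[0,1],[0,0]] and K the 2×2 matrix [[0,0],[f,g]], and set M = I_n ⊗ A + P ⊗ K (Kronecker products, a 2n×2n complex matrix). Then the spectrum of M equals the set of all ν ∈ ℂ such that ν² − λ·g·ν − λ·f = 0 for some eigenvalue λ of P; equivalently, the eigenvalues of M are exactly the numbers ν_{λ,±} = (λg ± √((λg)² + 4λf))/2 as λ runs through the spectrum of P. -/

import Mathlib

open Kronecker

open Matrix in
private lemma mem_spectrum_iff_det' {m : Type*} [Fintype m] [DecidableEq m]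
    (M : Matrix m m ℂ) (μ : ℂ) :
    μ ∈ spectrum ℂ M ↔ (μ • (1 : Matrix m m ℂ) - M).det = 0 := by
  rw [spectrum.mem_iff, Algebra.algebraMap_eq_smul_one, Matrix.isUnit_iff_isUnit_det,
    isUnit_iff_ne_zero, not_ne_iff]

private def myE (n : ℕ) : (Fin n ⊕ Fin n) ≃ Fin n × Fin 2 where
  toFun := Sum.elim (fun i => (i, 0)) (fun i => (i, 1))
  invFun := fun p => if p.2 = 0 then Sum.inl p.1 else Sum.inr p.1
  left_inv := by rintro (i | i) <;> simp
  right_inv := by rintro ⟨i, k⟩; fin_cases k <;> simp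

open Matrix in
private lemma blocks' {n : ℕ} (P : Matrix (Fin n) (Fin n) ℂ) (f g ν : ℂ) :
    (ν • (1 : Matrix (Fin n × Fin 2) (Fin n × Fin 2) ℂ) -
      ((1 : Matrix (Fin n) (Fin n) ℂ) ⊗ₖ (!![0, 1; 0, 0] : Matrix (Fin 2) (Fin 2) ℂ) +
        P ⊗ₖ (!![0, 0; f, g] : Matrix (Fin 2) (Fin 2) ℂ))).submatrix (myE n) (myE n) =
    fromBlocks (ν • 1) (-1) ((-f) • P) (ν • 1 - g • P) := by
  ext i j
  rcases i with i | i <;> rcases j with j | j <;>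
      simp only [myE, fromBlocks, Matrix.submatrix_apply, Equiv.coe_fn_mk, Sum.elim_inl,
        Sum.elim_inr, Matrix.sub_apply, Matrix.add_apply, Matrix.smul_apply, Matrix.one_apply,
        kroneckerMap_apply, Matrix.of_apply, Prod.mk.injEq, Matrix.neg_apply, Matrix.cons_val',
        Matrix.cons_val_zero, Matrix.cons_val_one, Matrix.head_cons, Matrix.head_fin_const,
        smul_eq_mul] <;>
    by_cases h : i = j <;> simp [h] <;> ring

open Matrix in
private lemma schur' {n : ℕ} (P : Matrix (Fin n) (Fin n) ℂ) (f g ν : ℂ) :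
    (fromBlocks (ν • (1 : Matrix (Fin n) (Fin n) ℂ)) (-1) ((-f) • P) (ν • 1 - g • P)).det = 0 ↔
      ((ν ^ 2) • (1 : Matrix (Fin n) (Fin n) ℂ) - (ν * g + f) • P).det = 0 := by
  set S : Matrix (Fin n ⊕ Fin n) (Fin n ⊕ Fin n) ℂ := fromBlocks (0 : Matrix (Fin n) (Fin n) ℂ) (1 : Matrix (Fin n) (Fin n) ℂ) (1 : Matrix (Fin n) (Fin n) ℂ) (0 : Matrix (Fin n) (Fin n) ℂ) with hS
  have hSS : S * S = 1 := by
    rw [hS, fromBlocks_multiply, ← fromBlocks_one]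
    simp
  have hdetS : S.det * S.det = 1 := by rw [← det_mul, hSS, det_one]
  have hmul : fromBlocks (ν • (1 : Matrix (Fin n) (Fin n) ℂ)) (-1) ((-f) • P) (ν • 1 - g • P) * S =
      fromBlocks (-1 : Matrix (Fin n) (Fin n) ℂ) (ν • 1) (ν • 1 - g • P) ((-f) • P) := by
    rw [hS, fromBlocks_multiply]
    simp
  letI : Invertible (-1 : Matrix (Fin n) (Fin n) ℂ) :=
    ⟨-1, by simp, by simp⟩
  have key : (fromBlocks (-1 : Matrix (Fin n) (Fin n) ℂ) (ν • 1) (ν • 1 - g • P)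
      ((-f) • P)).det = (-1 : Matrix (Fin n) (Fin n) ℂ).det *
        ((ν ^ 2) • (1 : Matrix (Fin n) (Fin n) ℂ) - (ν * g + f) • P).det := by
    rw [det_fromBlocks₁₁]
    congr 1
    congr 1
    have hinv : (⅟(-1 : Matrix (Fin n) (Fin n) ℂ)) = -1 := rfl
    rw [hinv]
    have : (ν • 1 - g • P) * -(1 : Matrix (Fin n) (Fin n) ℂ) * (ν • 1) =
        -(ν ^ 2 • 1 - (ν * g) • P) := by
      rw [mul_neg, mul_one, neg_mul, mul_smul_comm, mul_one]
      module
    rw [this]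
    module
  constructor
  · intro h
    have h2 : (fromBlocks (ν • (1 : Matrix (Fin n) (Fin n) ℂ)) (-1) ((-f) • P)
        (ν • 1 - g • P) * S).det = 0 := by
      rw [det_mul, h, zero_mul]
    rw [hmul, key, mul_eq_zero] at h2
    rcases h2 with h2 | h2
    · exfalso
      rw [det_neg, det_one, mul_one] at h2
      exact (pow_ne_zero _ (by norm_num : (-1 : ℂ) ≠ 0)) h2
    · exact h2
  · intro h
    have h2 : (fromBlocks (ν • (1 : Matrix (Fin n) (Fin n) ℂ)) (-1) ((-f) • P)
        (ν • 1 - g • P)).det * S.det = 0 := by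
      rw [← det_mul, hmul, key, h, mul_zero]
    rcases mul_eq_zero.mp h2 with h2 | h2
    · exact h2
    · exfalso; rw [h2, mul_zero] at hdetS; exact zero_ne_one hdetS

open Matrix in
private lemma finalstep' {n : ℕ} (hn : 1 ≤ n) (P : Matrix (Fin n) (Fin n) ℂ) (f g ν : ℂ) :
    ((ν ^ 2) • (1 : Matrix (Fin n) (Fin n) ℂ) - (ν * g + f) • P).det = 0 ↔
      ∃ lam ∈ spectrum ℂ P, ν ^ 2 - lam * g * ν - lam * f = 0 := by
  haveI : Nonempty (Fin n) := ⟨⟨0, hn⟩⟩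
  have hconv : ∀ lam : ℂ, (ν ^ 2 - lam * g * ν - lam * f = 0) ↔ ν ^ 2 = lam * (ν * g + f) := by
    intro lam; constructor <;> intro h <;> linear_combination h
  set c : ℂ := ν * g + f with hc
  by_cases hcz : c = 0
  · rw [hcz, zero_smul, sub_zero, det_smul, det_one, mul_one]
    rw [pow_eq_zero_iff (by positivity : (Fintype.card (Fin n)) ≠ 0)]
    constructor
    · intro h
      obtain ⟨lam, hlam⟩ := spectrum.nonempty_of_isAlgClosed_of_finiteDimensional ℂ P
      exact ⟨lam, hlam, by rw [hconv, hcz, mul_zero]; exact h⟩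
    · rintro ⟨lam, hlam, h⟩
      rw [hconv, hcz, mul_zero] at h; exact h
  · have key : (ν ^ 2) • (1 : Matrix (Fin n) (Fin n) ℂ) - c • P =
        c • ((ν ^ 2 / c) • (1 : Matrix (Fin n) (Fin n) ℂ) - P) := by
      rw [smul_sub, smul_smul, mul_div_cancel₀ _ hcz]
    rw [key, det_smul, mul_eq_zero]
    have : ¬ (c ^ Fintype.card (Fin n) = 0) := pow_ne_zero _ hcz
    simp only [this, false_or]
    rw [← mem_spectrum_iff_det']
    constructor
    · intro h
      exact ⟨ν ^ 2 / c, h, by rw [hconv]; field_simp⟩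
    · rintro ⟨lam, hlam, h⟩
      rw [hconv] at h
      have : lam = ν ^ 2 / c := by field_simp [h]; exact h.symm
      rwa [← this]

theorem stmt_2 (n : ℕ) (hn : 1 ≤ n) (P : Matrix (Fin n) (Fin n) ℂ) (f g : ℂ) :
    spectrum ℂ
        ((1 : Matrix (Fin n) (Fin n) ℂ) ⊗ₖ (!![0, 1; 0, 0] : Matrix (Fin 2) (Fin 2) ℂ) +
          P ⊗ₖ (!![0, 0; f, g] : Matrix (Fin 2) (Fin 2) ℂ)) =
      {ν : ℂ | ∃ lam ∈ spectrum ℂ P, ν ^ 2 - lam * g * ν - lam * f = 0} := by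
  ext ν
  rw [Set.mem_setOf_eq, mem_spectrum_iff_det',
    ← Matrix.det_submatrix_equiv_self (myE n), blocks', schur', finalstep' hn]
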